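/- The within-cluster sum of squares function f attains its global minimum (over all thresholds s strictly between the minimum and maximum data values) at some data point; i.e., there exists an index i with min p < p_i ≤ max p such that f(p_i) ≤ f(s) for all valid thresholds s. -/

import Mathlib

open Finset

/-- Within-cluster sum of squares for the split `{p i ≥ s}` vs `{p i < s}`. -/
noncomputable def wss {n : ℕ} (p : Fin n → ℝ) (s : ℝ) : ℝ :=
  let A := Finset.univ.filter (fun i => s ≤ p i)
  let B := Finset.univ.filter (fun i => p i < s)
  (∑ i ∈ A, (p i - (∑ j ∈ A, p j) / A.card) ^ 2) +
  (∑ i ∈ B, (p i - (∑ j ∈ B, p j) / B.card) ^ 2)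

lemma wss_congr {n : ℕ} (p : Fin n → ℝ) {s t : ℝ} (h : ∀ k, s ≤ p k ↔ t ≤ p k) :
    wss p s = wss p t := by
  have hA : Finset.univ.filter (fun i => s ≤ p i) = Finset.univ.filter (fun i => t ≤ p i) := by
    apply Finset.filter_congr; intro k _; simp [h k]
  have hB : Finset.univ.filter (fun i => p i < s) = Finset.univ.filter (fun i => p i < t) := by
    apply Finset.filter_congr; intro k _
    simp only [not_le.symm, h k, eq_iff_iff]
  simp only [wss, hA, hB]

/-- The within-cluster sum of squares attains its global minimum (over thresholds
making both clusters nonempty) at a data point `p i` with `min p < p i ≤ max p`. -/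
theorem wss_min_at_data_point {n : ℕ} (hn : 2 ≤ n) (p : Fin n → ℝ) (hp : Monotone p)
    (hne : ∃ i j : Fin n, p i ≠ p j) :
    ∃ i : Fin n,
      Finset.univ.inf' (Finset.univ_nonempty_iff.mpr ⟨⟨0, by omega⟩⟩) p < p i ∧
      p i ≤ Finset.univ.sup' (Finset.univ_nonempty_iff.mpr ⟨⟨0, by omega⟩⟩) p ∧
      ∀ s : ℝ, (∃ j, p j < s) → (∃ j, s ≤ p j) → wss p (p i) ≤ wss p s := by
  set m := Finset.univ.inf' (Finset.univ_nonempty_iff.mpr ⟨⟨0, by omega⟩⟩) p with hm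
  -- the set of candidate data points
  set S := Finset.univ.filter (fun i : Fin n => m < p i) with hS
  have hSne : S.Nonempty := by
    obtain ⟨a, b, hab⟩ := hne
    have ha : m ≤ p a := Finset.inf'_le _ (Finset.mem_univ a)
    have hb : m ≤ p b := Finset.inf'_le _ (Finset.mem_univ b)
    rcases lt_or_eq_of_le ha with h | h
    · exact ⟨a, by simp [hS, h]⟩
    · refine ⟨b, ?_⟩
      simp only [hS, Finset.mem_filter, Finset.mem_univ, true_and]
      rcases lt_or_eq_of_le hb with h' | h'
      · exact h'
      · exact absurd (h.symm.trans h') hab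
  obtain ⟨i, hiS, hmin⟩ := S.exists_min_image (fun i => wss p (p i)) hSne
  simp only [hS, Finset.mem_filter, Finset.mem_univ, true_and] at hiS
  refine ⟨i, hiS, Finset.le_sup' _ (Finset.mem_univ i), ?_⟩
  intro s hs1 hs2
  -- pick the minimal index j with s ≤ p j
  have hFne : (Finset.univ.filter (fun j : Fin n => s ≤ p j)).Nonempty := by
    obtain ⟨j, hj⟩ := hs2; exact ⟨j, by simp [hj]⟩
  set j := (Finset.univ.filter (fun j : Fin n => s ≤ p j)).min' hFne with hj
  have hjmem : s ≤ p j := by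
    have := Finset.min'_mem _ hFne
    simpa using this
  have hiff : ∀ k, s ≤ p k ↔ p j ≤ p k := by
    intro k
    constructor
    · intro hk
      exact hp (Finset.min'_le _ k (by simp [hk]))
    · intro hk; exact le_trans hjmem hk
  have heq : wss p s = wss p (p j) := wss_congr p hiff
  have hjS : j ∈ S := by
    obtain ⟨k, hk⟩ := hs1
    have : m ≤ p k := Finset.inf'_le _ (Finset.mem_univ k)
    simp only [hS, Finset.mem_filter, Finset.mem_univ, true_and]
    exact lt_of_le_of_lt this (lt_of_lt_of_le hk hjmem)
  rw [heq]
  exact hmin j hjS
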